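/- arXiv:quant-ph/0302136 — 2 statements merged into one kernel-verified Lean document; each statement's English description precedes it below -/
import Mathlib

section
/- (Optimality of the risk-neutral separation controller.) Let Γ, L, N, M be as in the risk-neutral setting and let V satisfy the risk-neutral dynamic programming equation (V(ω,M) = ⟨ω,N⟩; V(ω,k) = inf_{u∈U} { ⟨ω,L(u)⟩ + ∑_{y∈Y} V(Λ_Γ(u,y)ω, k+1) p(y|u,ω) } for 0 ≤ k ≤ M−1). Suppose moreover that for every positive semidefinite ω and every 0 ≤ k ≤ M−1 there is a control u*(ω,k) ∈ U attaining the infimum. Fix a normalized initial state ω₀ and define the separation controller K* by u_k = u*(ω_k,k), where ω_{k+1} = Λ_Γ(u_k, y_{k+1}) ω_k. Then J_{ω₀,0}(K*) = V(ω₀,0), and consequently J_{ω₀,0}(K*) ≤ J_{ω₀,0}(K) for every feedback controller K. -/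
open Matrix BigOperators
open scoped ComplexOrder

noncomputable section

/-- Complex `n × n` matrices. -/
abbrev Mat (n : ℕ) := Matrix (Fin n) (Fin n) ℂ

/-- Real part of the trace. -/
def trR {n : ℕ} (A : Mat n) : ℝ := A.trace.re

/-- The probability `p(y|u,ω) = tr(Γ(u,y)ω)`. -/
def pDist {n : ℕ} {U Y : Type*} (Γ : U → Y → Mat n →ₗ[ℂ] Mat n)
    (u : U) (y : Y) (ω : Mat n) : ℝ := trR (Γ u y ω)

/-- The conditional state `Λ_Γ(u,y)ω = Γ(u,y)ω / p(y|u,ω)` (equal to `0` when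
`p(y|u,ω) = 0`). -/
def lamState {n : ℕ} {U Y : Type*} (Γ : U → Y → Mat n →ₗ[ℂ] Mat n)
    (u : U) (y : Y) (ω : Mat n) : Mat n := (pDist Γ u y ω)⁻¹ • Γ u y ω

/-- `∏_{i} p(y_{i+1}|u_i,ω_i)` along the measurement record `ys`, where the controller
`K` (a function of the accumulated record) chooses the controls and the state evolves
by `ω_{i+1} = Λ_Γ(u_i,y_{i+1}) ω_i`.  `rec` is the record accumulated so far. -/
def prodP {n : ℕ} {U Y : Type*} (Γ : U → Y → Mat n →ₗ[ℂ] Mat n)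
    (K : List Y → U) : Mat n → List Y → List Y → ℝ
  | _, _, [] => 1
  | ω, rec, y :: ys =>
      pDist Γ (K rec) y ω * prodP Γ K (lamState Γ (K rec) y ω) (rec ++ [y]) ys

/-- `∑_i ⟨ω_i, L(u_i)⟩ + ⟨ω_M, N⟩` along the measurement record `ys`. -/
def sumCost {n : ℕ} {U Y : Type*} (Γ : U → Y → Mat n →ₗ[ℂ] Mat n)
    (L : U → Mat n) (N : Mat n) (K : List Y → U) :
    Mat n → List Y → List Y → ℝ
  | ω, _, [] => trR (N * ω)
  | ω, rec, y :: ys =>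
      trR (L (K rec) * ω) + sumCost Γ L N K (lamState Γ (K rec) y ω) (rec ++ [y]) ys

/-- The risk-neutral cost-to-go with `m` remaining steps:
`J_{ω}(K) = ∑_{y-sequences} (∏ p) · (∑ running costs + terminal cost)`. -/
def Jrn {n : ℕ} {U Y : Type*} [Fintype Y] (Γ : U → Y → Mat n →ₗ[ℂ] Mat n)
    (L : U → Mat n) (N : Mat n) (m : ℕ) (K : List Y → U) (ω : Mat n) : ℝ :=
  ∑ ys : Fin m → Y,
    prodP Γ K ω [] (List.ofFn ys) * sumCost Γ L N K ω [] (List.ofFn ys)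


/-- The state trajectory of the separation controller: starting from `ω` at time `k`,
follow the outcomes `ys`, applying at each step the control `ustar(current state, time)`. -/
def sepEvolve {n : ℕ} {U Y : Type*} (Γ : U → Y → Mat n →ₗ[ℂ] Mat n)
    (ustar : Mat n → ℕ → U) : Mat n → ℕ → List Y → Mat n
  | ω, _, [] => ω
  | ω, k, y :: ys => sepEvolve Γ ustar (lamState Γ (ustar ω k) y ω) (k + 1) ys

/-- The separation controller `K*` determined by `ustar` and the initial state `ω₀`:
on the record `rec` it applies `ustar` to the current conditional state and time. -/
def sepController {n : ℕ} {U Y : Type*} (Γ : U → Y → Mat n →ₗ[ℂ] Mat n)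
    (ustar : Mat n → ℕ → U) (ω₀ : Mat n) (rec : List Y) : U :=
  ustar (sepEvolve Γ ustar ω₀ 0 rec) rec.length

set_option linter.unusedSectionVars false
set_option linter.unusedVariables false
set_option maxHeartbeats 800000

lemma psd_trace_nonneg {n : ℕ} {A : Mat n} (h : A.PosSemidef) : (0:ℂ) ≤ A.trace := by
  unfold Matrix.trace
  apply Finset.sum_nonneg
  intro i _
  have := h.dotProduct_mulVec_nonneg (Pi.single i 1)
  simpa [dotProduct, Matrix.mulVec, Pi.single_apply, Finset.sum_ite_eq] using this

lemma trR_nonneg {n : ℕ} {A : Mat n} (h : A.PosSemidef) : 0 ≤ trR A := by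
  have := psd_trace_nonneg h
  rw [Complex.le_def] at this
  simpa [trR] using this.1

lemma trace_eq_trR {n : ℕ} {A : Mat n} (h : A.PosSemidef) : A.trace = (trR A : ℂ) := by
  have := psd_trace_nonneg h
  rw [Complex.le_def] at this
  exact Complex.ext rfl (by simpa [trR] using this.2.symm)

lemma trR_smul {n : ℕ} (r : ℝ) (A : Mat n) : trR (r • A) = r * trR A := by
  simp [trR, Matrix.trace_smul, Complex.smul_re]

lemma real_smul_eq {n : ℕ} (r : ℝ) (A : Mat n) : r • A = (r:ℂ) • A := by
  ext i j; simp [Complex.real_smul]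

lemma psd_real_smul {n : ℕ} {A : Mat n} {r : ℝ} (hr : 0 ≤ r) (h : A.PosSemidef) :
    (r • A).PosSemidef := by
  rw [real_smul_eq]
  refine Matrix.PosSemidef.of_dotProduct_mulVec_nonneg ?_ ?_
  · rw [Matrix.IsHermitian, Matrix.conjTranspose_smul, h.1]
    congr 1
    simp [Complex.ext_iff]
  · intro x
    rw [Matrix.smul_mulVec, dotProduct_smul, smul_eq_mul]
    exact mul_nonneg (by simpa [Complex.le_def] using hr) (h.dotProduct_mulVec_nonneg x)

section Main
variable {n : ℕ} {U Y : Type*} [Fintype U] [Nonempty U] [Fintype Y] [Nonempty Y]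
variable (Γ : U → Y → Mat n →ₗ[ℂ] Mat n)

lemma pDist_nonneg (hPSD : ∀ (u : U) (y : Y) (ω : Mat n), ω.PosSemidef → (Γ u y ω).PosSemidef)
    (u : U) (y : Y) {ω : Mat n} (hω : ω.PosSemidef) : 0 ≤ pDist Γ u y ω :=
  trR_nonneg (hPSD u y ω hω)

lemma lamState_psd (hPSD : ∀ (u : U) (y : Y) (ω : Mat n), ω.PosSemidef → (Γ u y ω).PosSemidef)
    (u : U) (y : Y) {ω : Mat n} (hω : ω.PosSemidef) : (lamState Γ u y ω).PosSemidef :=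
  psd_real_smul (inv_nonneg.mpr (pDist_nonneg Γ hPSD u y hω)) (hPSD u y ω hω)

lemma lamState_trR (hPSD : ∀ (u : U) (y : Y) (ω : Mat n), ω.PosSemidef → (Γ u y ω).PosSemidef)
    (u : U) (y : Y) {ω : Mat n} (hω : ω.PosSemidef) (hp : pDist Γ u y ω ≠ 0) :
    trR (lamState Γ u y ω) = 1 := by
  unfold lamState
  rw [trR_smul]
  exact inv_mul_cancel₀ hp

lemma sum_pDist (hNorm : ∀ (u : U) (ω : Mat n), ∑ y : Y, (Γ u y ω).trace = ω.trace)
    (u : U) (ω : Mat n) : ∑ y : Y, pDist Γ u y ω = trR ω := by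
  have := congrArg Complex.re (hNorm u ω)
  simpa [Complex.re_sum, pDist, trR] using this

lemma sum_ofFn_succ {m : ℕ} (g : List Y → ℝ) :
    ∑ f : Fin (m+1) → Y, g (List.ofFn f) = ∑ y : Y, ∑ f : Fin m → Y, g (y :: List.ofFn f) := by
  have h1 : ∑ f : Fin (m+1) → Y, g (List.ofFn f)
      = ∑ p : Y × (Fin m → Y), g (p.1 :: List.ofFn p.2) :=
    Fintype.sum_equiv (Fin.consEquiv fun _ => Y).symm _ _ (fun f => by
      simp only [List.ofFn_succ, Fin.consEquiv, Equiv.coe_fn_symm_mk, Equiv.coe_fn_mk]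
      rfl)
  rw [h1, Fintype.sum_prod_type]



variable (L : U → Mat n) (N : Mat n)

/-- Cost-to-go in recursive (DP) form. -/
def JK (K : List Y → U) : Mat n → List Y → ℕ → ℝ
  | ω, _, 0 => trR (N * ω)
  | ω, rec, m+1 => ∑ y : Y, pDist Γ (K rec) y ω *
      (trR (L (K rec) * ω) + JK K (lamState Γ (K rec) y ω) (rec ++ [y]) m)

variable (hPSD : ∀ (u : U) (y : Y) (ω : Mat n), ω.PosSemidef → (Γ u y ω).PosSemidef)
variable (hNorm : ∀ (u : U) (ω : Mat n), ∑ y : Y, (Γ u y ω).trace = ω.trace)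

include hPSD hNorm in
lemma mass_one (K : List Y → U) :
    ∀ (m : ℕ) (ω : Mat n) (rec : List Y), ω.PosSemidef → trR ω = 1 →
      ∑ f : Fin m → Y, prodP Γ K ω rec (List.ofFn f) = 1 := by
  intro m
  induction m with
  | zero => intro ω rec hω htr; simp [prodP]
  | succ m ih =>
    intro ω rec hω htr
    rw [sum_ofFn_succ (fun l => prodP Γ K ω rec l)]
    have key : ∀ y : Y,
        (∑ f : Fin m → Y, prodP Γ K ω rec (y :: List.ofFn f)) = pDist Γ (K rec) y ω := by
      intro y
      simp only [prodP]
      rw [← Finset.mul_sum]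
      rcases eq_or_ne (pDist Γ (K rec) y ω) 0 with hp | hp
      · simp [hp]
      · rw [ih _ _ (lamState_psd Γ hPSD _ _ hω) (lamState_trR Γ hPSD _ _ hω hp), mul_one]
    rw [Finset.sum_congr rfl (fun y _ => key y), sum_pDist Γ hNorm, htr]

include hPSD hNorm in
lemma Jrn_eq_JK (K : List Y → U) :
    ∀ (m : ℕ) (ω : Mat n) (rec : List Y), ω.PosSemidef →
      ∑ f : Fin m → Y, prodP Γ K ω rec (List.ofFn f) * sumCost Γ L N K ω rec (List.ofFn f)
        = JK Γ L N K ω rec m := by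
  intro m
  induction m with
  | zero => intro ω rec hω; simp [prodP, sumCost, JK]
  | succ m ih =>
    intro ω rec hω
    rw [sum_ofFn_succ (fun l => prodP Γ K ω rec l * sumCost Γ L N K ω rec l)]
    show (∑ y : Y, ∑ f : Fin m → Y, prodP Γ K ω rec (y :: List.ofFn f)
        * sumCost Γ L N K ω rec (y :: List.ofFn f)) = _
    simp only [prodP, sumCost, JK]
    refine Finset.sum_congr rfl (fun y _ => ?_)
    rcases eq_or_ne (pDist Γ (K rec) y ω) 0 with hp | hp
    · simp [hp]
    · have hpsd' := lamState_psd Γ hPSD (K rec) y hω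
      have htr' := lamState_trR Γ hPSD (K rec) y hω hp
      calc ∑ f : Fin m → Y, pDist Γ (K rec) y ω
              * prodP Γ K (lamState Γ (K rec) y ω) (rec ++ [y]) (List.ofFn f)
              * (trR (L (K rec) * ω)
                + sumCost Γ L N K (lamState Γ (K rec) y ω) (rec ++ [y]) (List.ofFn f))
          = pDist Γ (K rec) y ω * (trR (L (K rec) * ω)
              * (∑ f : Fin m → Y, prodP Γ K (lamState Γ (K rec) y ω) (rec ++ [y]) (List.ofFn f))
              + ∑ f : Fin m → Y, prodP Γ K (lamState Γ (K rec) y ω) (rec ++ [y]) (List.ofFn f)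
                  * sumCost Γ L N K (lamState Γ (K rec) y ω) (rec ++ [y]) (List.ofFn f)) := by
            simp only [mul_add, Finset.mul_sum, ← Finset.sum_add_distrib]
            exact Finset.sum_congr rfl (fun f _ => by ring)
        _ = _ := by
            rw [mass_one Γ hPSD hNorm K m _ _ hpsd' htr', ih _ _ hpsd', mul_one]


lemma sepEvolve_append (ustar : Mat n → ℕ → U) :
    ∀ (rec : List Y) (ω : Mat n) (k : ℕ) (y : Y),
      sepEvolve Γ ustar ω k (rec ++ [y])
        = lamState Γ (ustar (sepEvolve Γ ustar ω k rec) (k + rec.length)) y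
            (sepEvolve Γ ustar ω k rec) := by
  intro rec
  induction rec with
  | nil => intro ω k y; simp [sepEvolve]
  | cons a l ih =>
    intro ω k y
    show sepEvolve Γ ustar (lamState Γ (ustar ω k) a ω) (k+1) (l ++ [y]) = _
    rw [ih]
    have : k + (a :: l).length = (k + 1) + l.length := by simp; omega
    rw [this]
    rfl

variable (M : ℕ) (V : Mat n → ℕ → ℝ)
variable (hVM : ∀ ω : Mat n, V ω M = trR (N * ω))
variable (ustar : Mat n → ℕ → U)
variable (hustar : ∀ k < M, ∀ ω : Mat n, ω.PosSemidef →
      trR (L (ustar ω k) * ω)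
        + ∑ y : Y, V (lamState Γ (ustar ω k) y ω) (k + 1) * pDist Γ (ustar ω k) y ω
      = V ω k)

include hPSD hNorm hVM hustar in
lemma sep_value (ω₀ : Mat n) :
    ∀ (m : ℕ) (ω : Mat n) (rec : List Y), ω.PosSemidef → trR ω = 1 →
      rec.length + m = M → sepEvolve Γ ustar ω₀ 0 rec = ω →
      JK Γ L N (sepController Γ ustar ω₀) ω rec m = V ω rec.length := by
  intro m
  induction m with
  | zero =>
    intro ω rec hω htr hlen hev
    show trR (N * ω) = _
    rw [show rec.length = M from by omega, hVM]
  | succ m ih =>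
    intro ω rec hω htr hlen hev
    have hk : rec.length < M := by omega
    have hKrec : sepController Γ ustar ω₀ rec = ustar ω rec.length := by
      unfold sepController; rw [hev]
    show (∑ y : Y, pDist Γ (sepController Γ ustar ω₀ rec) y ω *
      (trR (L (sepController Γ ustar ω₀ rec) * ω) +
        JK Γ L N (sepController Γ ustar ω₀)
          (lamState Γ (sepController Γ ustar ω₀ rec) y ω) (rec ++ [y]) m)) = _
    rw [hKrec]
    have hchild : ∀ y : Y, pDist Γ (ustar ω rec.length) y ω ≠ 0 →
        JK Γ L N (sepController Γ ustar ω₀)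
          (lamState Γ (ustar ω rec.length) y ω) (rec ++ [y]) m
        = V (lamState Γ (ustar ω rec.length) y ω) (rec.length + 1) := by
      intro y hp
      have hev' : sepEvolve Γ ustar ω₀ 0 (rec ++ [y])
          = lamState Γ (ustar ω rec.length) y ω := by
        rw [sepEvolve_append Γ ustar, hev]
        simp
      have := ih (lamState Γ (ustar ω rec.length) y ω) (rec ++ [y])
        (lamState_psd Γ hPSD _ _ hω) (lamState_trR Γ hPSD _ _ hω hp)
        (by simp; omega) hev'
      rw [this]
      congr 1
      simp
    calc (∑ y : Y, pDist Γ (ustar ω rec.length) y ω *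
          (trR (L (ustar ω rec.length) * ω) +
            JK Γ L N (sepController Γ ustar ω₀)
              (lamState Γ (ustar ω rec.length) y ω) (rec ++ [y]) m))
        = ∑ y : Y, (pDist Γ (ustar ω rec.length) y ω * trR (L (ustar ω rec.length) * ω)
            + V (lamState Γ (ustar ω rec.length) y ω) (rec.length + 1)
              * pDist Γ (ustar ω rec.length) y ω) := by
          refine Finset.sum_congr rfl (fun y _ => ?_)
          rcases eq_or_ne (pDist Γ (ustar ω rec.length) y ω) 0 with hp | hp
          · simp [hp]
          · rw [hchild y hp]; ring
      _ = trR (L (ustar ω rec.length) * ω)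
            + ∑ y : Y, V (lamState Γ (ustar ω rec.length) y ω) (rec.length + 1)
              * pDist Γ (ustar ω rec.length) y ω := by
          rw [Finset.sum_add_distrib, ← Finset.sum_mul, sum_pDist Γ hNorm, htr, one_mul]
      _ = V ω rec.length := hustar _ hk _ hω

variable (hVk : ∀ k < M, ∀ ω : Mat n, ω.PosSemidef →
      V ω k = ⨅ u : U,
        (trR (L u * ω) + ∑ y : Y, V (lamState Γ u y ω) (k + 1) * pDist Γ u y ω))

include hPSD hNorm hVM hVk in
lemma value_le (K : List Y → U) :
    ∀ (m : ℕ) (ω : Mat n) (rec : List Y), ω.PosSemidef → trR ω = 1 →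
      rec.length + m = M →
      V ω rec.length ≤ JK Γ L N K ω rec m := by
  intro m
  induction m with
  | zero =>
    intro ω rec hω htr hlen
    rw [show rec.length = M from by omega, hVM]
    exact le_of_eq rfl
  | succ m ih =>
    intro ω rec hω htr hlen
    have hk : rec.length < M := by omega
    rw [hVk _ hk _ hω]
    refine le_trans (ciInf_le (Finite.bddBelow_range _) (K rec)) ?_
    show trR (L (K rec) * ω)
        + ∑ y : Y, V (lamState Γ (K rec) y ω) (rec.length + 1) * pDist Γ (K rec) y ω
      ≤ ∑ y : Y, pDist Γ (K rec) y ω *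
          (trR (L (K rec) * ω) + JK Γ L N K (lamState Γ (K rec) y ω) (rec ++ [y]) m)
    have hexp : (∑ y : Y, pDist Γ (K rec) y ω *
          (trR (L (K rec) * ω) + JK Γ L N K (lamState Γ (K rec) y ω) (rec ++ [y]) m))
        = trR (L (K rec) * ω)
          + ∑ y : Y, pDist Γ (K rec) y ω
              * JK Γ L N K (lamState Γ (K rec) y ω) (rec ++ [y]) m := by
      simp only [mul_add, Finset.sum_add_distrib, ← Finset.sum_mul, sum_pDist Γ hNorm, htr,
        one_mul]
    rw [hexp]
    refine (add_le_add_iff_left _).mpr (Finset.sum_le_sum (fun y _ => ?_))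
    rcases eq_or_ne (pDist Γ (K rec) y ω) 0 with hp | hp
    · simp [hp]
    · rw [mul_comm]
      refine mul_le_mul_of_nonneg_left ?_ (pDist_nonneg Γ hPSD _ _ hω)
      have := ih (lamState Γ (K rec) y ω) (rec ++ [y])
        (lamState_psd Γ hPSD _ _ hω) (lamState_trR Γ hPSD _ _ hω hp) (by simp; omega)
      simpa using this

end Main

/-- optimality of the risk-neutral separation controller.  If `V`
satisfies the dynamic programming equation and `ustar` attains the infimum, then the
separation controller `K*` achieves `J_{ω₀,0}(K*) = V(ω₀,0)` and is optimal. -/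
theorem riskNeutral_separation_optimal
    {n : ℕ} {U Y : Type*} [Fintype U] [Nonempty U] [Fintype Y] [Nonempty Y]
    (Γ : U → Y → Mat n →ₗ[ℂ] Mat n)
    (hPSD : ∀ (u : U) (y : Y) (ω : Mat n), ω.PosSemidef → (Γ u y ω).PosSemidef)
    (hNorm : ∀ (u : U) (ω : Mat n), ∑ y : Y, (Γ u y ω).trace = ω.trace)
    (L : U → Mat n) (hL : ∀ u, (L u).PosSemidef)
    (N : Mat n) (hN : N.PosSemidef)
    (M : ℕ) (hM : 1 ≤ M)
    (V : Mat n → ℕ → ℝ)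
    (hVM : ∀ ω : Mat n, V ω M = trR (N * ω))
    (hVk : ∀ k < M, ∀ ω : Mat n, ω.PosSemidef →
      V ω k = ⨅ u : U,
        (trR (L u * ω) + ∑ y : Y, V (lamState Γ u y ω) (k + 1) * pDist Γ u y ω))
    (ustar : Mat n → ℕ → U)
    (hustar : ∀ k < M, ∀ ω : Mat n, ω.PosSemidef →
      trR (L (ustar ω k) * ω)
        + ∑ y : Y, V (lamState Γ (ustar ω k) y ω) (k + 1) * pDist Γ (ustar ω k) y ω
      = V ω k)
    (ω₀ : Mat n) (hω₀ : ω₀.PosSemidef) (hω₀tr : ω₀.trace = 1) :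
    Jrn Γ L N M (sepController Γ ustar ω₀) ω₀ = V ω₀ 0
    ∧ ∀ K : List Y → U, Jrn Γ L N M (sepController Γ ustar ω₀) ω₀ ≤ Jrn Γ L N M K ω₀ := by
  have htr0 : trR ω₀ = 1 := by simp [trR, hω₀tr]
  have hJ : ∀ K : List Y → U, Jrn Γ L N M K ω₀ = JK Γ L N K ω₀ [] M := fun K =>
    Jrn_eq_JK Γ L N hPSD hNorm K M ω₀ [] hω₀
  have hsep : JK Γ L N (sepController Γ ustar ω₀) ω₀ [] M = V ω₀ 0 :=
    sep_value Γ L N hPSD hNorm M V hVM ustar hustar ω₀ M ω₀ [] hω₀ htr0 (by simp) rfl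
  constructor
  · rw [hJ, hsep]
  · intro K
    rw [hJ, hJ, hsep]
    exact value_le Γ L N hPSD hNorm M V hVM hVk K M ω₀ [] hω₀ htr0 (by simp)
end
end

section
/- (Theorem 1(i): risk-sensitive verification inequality.) Let Γ be a controlled transfer operator, R an operator valued cost, F a Hermitian matrix, and M ≥ 1. Suppose W assigns a real number W(ω̂,k) to each positive semidefinite matrix ω̂ and each time 0 ≤ k ≤ M, and satisfies the dynamic programming equation: W(ω̂,M) = ⟨ω̂, F⟩ for all ω̂, and for all 0 ≤ k ≤ M−1 and all positive semidefinite ω̂, W(ω̂,k) = inf_{u∈U} { ∑_{y∈Y} W(Λ_{Γ,R}(u,y)ω̂, k+1) · p_R(y|u,ω̂) }. Then for every 0 ≤ k ≤ M, every positive semidefinite ω̂, and every feedback controller K on [k, M−1], W(ω̂,k) ≤ J^μ_{ω̂,k}(K). -/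
open Matrix BigOperators
open scoped ComplexOrder

noncomputable section

/-- `p_R(y|u,ωh) = tr(Γ(u,y)(R(u)ωh)) / tr(R(u)ωh)` (equal to `0` when the
denominator vanishes, by the junk-value convention of real division). -/
def pR {n : ℕ} {U Y : Type*} (Γ : U → Y → Mat n →ₗ[ℂ] Mat n)
    (R : U → Mat n → Mat n) (u : U) (y : Y) (ωh : Mat n) : ℝ :=
  trR (Γ u y (R u ωh)) / trR (R u ωh)

/-- The unnormalized conditional state
`Λ_{Γ,R}(u,y)ωh = Γ_R(u,y)ωh / p_R(y|u,ωh)` (equal to `0` when `p_R(y|u,ωh) = 0`). -/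
def lamR {n : ℕ} {U Y : Type*} (Γ : U → Y → Mat n →ₗ[ℂ] Mat n)
    (R : U → Mat n → Mat n) (u : U) (y : Y) (ωh : Mat n) : Mat n :=
  (pR Γ R u y ωh)⁻¹ • Γ u y (R u ωh)

/-- The cost functional `G`: `G(ωh) = tr(F ωh)` when no outcomes remain, and otherwise
`G_j(ωh) = G_{j+1}(Γ(u_j,y_{j+1}) R(u_j) ωh)`, with controls `u_j = K(record so far)`. -/
def Gcost {n : ℕ} {U Y : Type*} (Γ : U → Y → Mat n →ₗ[ℂ] Mat n)
    (R : U → Mat n → Mat n) (F : Mat n) (K : List Y → U) :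
    List Y → Mat n → List Y → ℝ
  | _, ωh, [] => trR (F * ωh)
  | rec, ωh, y :: ys =>
      Gcost Γ R F K (rec ++ [y]) (Γ (K rec) y (R (K rec) ωh)) ys

/-- `∏_k p_R(y_{k+1}|u_k, ωh_k)` along the record `ys`, with the unnormalized
conditional dynamics `ωh_{k+1} = Λ_{Γ,R}(u_k,y_{k+1}) ωh_k`. -/
def prodPR {n : ℕ} {U Y : Type*} (Γ : U → Y → Mat n →ₗ[ℂ] Mat n)
    (R : U → Mat n → Mat n) (K : List Y → U) : Mat n → List Y → List Y → ℝ
  | _, _, [] => 1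
  | ωh, rec, y :: ys =>
      pR Γ R (K rec) y ωh * prodPR Γ R K (lamR Γ R (K rec) y ωh) (rec ++ [y]) ys

/-- The terminal state of the unnormalized conditional dynamics
`ωh_{k+1} = Λ_{Γ,R}(u_k,y_{k+1}) ωh_k` along the record `ys`. -/
def trajR {n : ℕ} {U Y : Type*} (Γ : U → Y → Mat n →ₗ[ℂ] Mat n)
    (R : U → Mat n → Mat n) (K : List Y → U) : Mat n → List Y → List Y → Mat n
  | ωh, _, [] => ωh
  | ωh, rec, y :: ys => trajR Γ R K (lamR Γ R (K rec) y ωh) (rec ++ [y]) ys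

lemma psd_eq_conjTranspose_mul_self {n : ℕ} {A : Mat n} (hA : A.PosSemidef) :
    ∃ B : Mat n, A = Bᴴ * B := by
  open scoped MatrixOrder in
  obtain ⟨B, hB⟩ := CStarAlgebra.nonneg_iff_eq_star_mul_self.mp hA.nonneg
  exact ⟨B, hB⟩

/-- Auxiliary: the real part of the trace of a PSD matrix is nonnegative. -/
lemma trR_nonneg_of_psd {n : ℕ} {A : Mat n} (hA : A.PosSemidef) : 0 ≤ trR A := by
  obtain ⟨B, rfl⟩ := psd_eq_conjTranspose_mul_self hA
  have : trR (Bᴴ * B) = ∑ i, ∑ j, Complex.normSq (B j i) := by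
    simp [trR, Matrix.trace, Matrix.diag, Matrix.mul_apply, Matrix.conjTranspose_apply,
      Complex.re_sum, Complex.normSq_eq_conj_mul_self, Complex.normSq_apply]
  rw [this]
  refine Finset.sum_nonneg fun i _ => Finset.sum_nonneg fun j _ => Complex.normSq_nonneg _

/-- Auxiliary: a PSD matrix with zero (real part of) trace is zero. -/
lemma eq_zero_of_psd_trR_eq_zero {n : ℕ} {A : Mat n} (hA : A.PosSemidef)
    (h : trR A = 0) : A = 0 := by
  obtain ⟨B, rfl⟩ := psd_eq_conjTranspose_mul_self hA
  have hsum : trR (Bᴴ * B) = ∑ i, ∑ j, Complex.normSq (B j i) := by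
    simp [trR, Matrix.trace, Matrix.diag, Matrix.mul_apply, Matrix.conjTranspose_apply,
      Complex.re_sum, Complex.normSq_eq_conj_mul_self, Complex.normSq_apply]
  rw [hsum] at h
  have hB : B = 0 := by
    ext i j
    have h1 : ∀ i ∈ (Finset.univ : Finset (Fin n)),
        0 ≤ ∑ j, Complex.normSq (B j i) := by
      intro i _
      exact Finset.sum_nonneg fun j _ => Complex.normSq_nonneg _
    have h2 := (Finset.sum_eq_zero_iff_of_nonneg h1).mp h j (Finset.mem_univ _)
    have h3 : ∀ k ∈ (Finset.univ : Finset (Fin n)), 0 ≤ Complex.normSq (B k j) := by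
      intro k _; exact Complex.normSq_nonneg _
    have := (Finset.sum_eq_zero_iff_of_nonneg h3).mp h2 i (Finset.mem_univ _)
    simpa using Complex.normSq_eq_zero.mp this
  simp [hB]

/-- Auxiliary: PSD is preserved by nonnegative real scalar multiplication. -/
lemma psd_real_smul_s5 {n : ℕ} {A : Mat n} (hA : A.PosSemidef) {c : ℝ} (hc : 0 ≤ c) :
    (c • A).PosSemidef := by
  have h : c • A = (c : ℂ) • A := by
    ext i j; simp [Complex.real_smul]
  rw [h]
  have hcc : (0 : ℂ) ≤ (c : ℂ) := by
    rw [Complex.le_def]; simp [hc]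
  rw [Matrix.posSemidef_iff_dotProduct_mulVec] at hA ⊢
  constructor
  · have h1 := hA.1
    unfold Matrix.IsHermitian at *
    rw [Matrix.conjTranspose_smul, h1]
    congr 1
    simp [Complex.ext_iff]
  · intro x
    have h0 := hA.2 x
    rw [Matrix.smul_mulVec, dotProduct_smul, smul_eq_mul]
    exact mul_nonneg hcc h0

/-- Auxiliary: real homogeneity of `Gcost` in the state. -/
lemma Gcost_smul {n : ℕ} {U Y : Type*} (Γ : U → Y → Mat n →ₗ[ℂ] Mat n)
    (R : U → Mat n → Mat n)
    (hRhom : ∀ (u : U) (r : ℝ) (ωh : Mat n), R u (r • ωh) = r • R u ωh)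
    (F : Mat n) (K : List Y → U) :
    ∀ (ys : List Y) (rec : List Y) (r : ℝ) (ωh : Mat n),
      Gcost Γ R F K rec (r • ωh) ys = r * Gcost Γ R F K rec ωh ys := by
  intro ys
  induction ys with
  | nil =>
    intro rec r ωh
    simp [Gcost, trR, Matrix.mul_smul, Complex.smul_re]
  | cons y ys ih =>
    intro rec r ωh
    show Gcost Γ R F K (rec ++ [y]) (Γ (K rec) y (R (K rec) (r • ωh))) ys
      = r * Gcost Γ R F K (rec ++ [y]) (Γ (K rec) y (R (K rec) ωh)) ys
    rw [hRhom, LinearMap.map_smul_of_tower, ih]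

/-- Auxiliary: `Gcost` of the zero state is zero. -/
lemma Gcost_zero {n : ℕ} {U Y : Type*} (Γ : U → Y → Mat n →ₗ[ℂ] Mat n)
    (R : U → Mat n → Mat n)
    (hRhom : ∀ (u : U) (r : ℝ) (ωh : Mat n), R u (r • ωh) = r • R u ωh)
    (F : Mat n) (K : List Y → U) (ys rec : List Y) :
    Gcost Γ R F K rec 0 ys = 0 := by
  have := Gcost_smul Γ R hRhom F K ys rec 0 0
  simpa using this

/-- Theorem 1(i): risk-sensitive verification inequality.  If `W`
satisfies the risk-sensitive dynamic programming equation, then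
`W(ωh,k) ≤ J^μ_{ωh,k}(K)` for every positive semidefinite `ωh` and every feedback
controller `K` on `[k, M−1]`. -/
theorem riskSensitive_verification
    {n : ℕ} {U Y : Type*} [Fintype U] [Nonempty U] [Fintype Y] [Nonempty Y]
    (Γ : U → Y → Mat n →ₗ[ℂ] Mat n)
    (hPSD : ∀ (u : U) (y : Y) (ω : Mat n), ω.PosSemidef → (Γ u y ω).PosSemidef)
    (hNorm : ∀ (u : U) (ω : Mat n), ∑ y : Y, (Γ u y ω).trace = ω.trace)
    (R : U → Mat n → Mat n)
    (hRPSD : ∀ (u : U) (ωh : Mat n), ωh.PosSemidef → (R u ωh).PosSemidef)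
    (hRhom : ∀ (u : U) (r : ℝ) (ωh : Mat n), R u (r • ωh) = r • R u ωh)
    (F : Mat n) (hF : F.IsHermitian)
    (M : ℕ) (hM : 1 ≤ M)
    (W : Mat n → ℕ → ℝ)
    (hWM : ∀ ωh : Mat n, W ωh M = trR (F * ωh))
    (hWk : ∀ k < M, ∀ ωh : Mat n, ωh.PosSemidef →
      W ωh k = ⨅ u : U, ∑ y : Y, W (lamR Γ R u y ωh) (k + 1) * pR Γ R u y ωh) :
    ∀ k ≤ M, ∀ ωh : Mat n, ωh.PosSemidef →
      ∀ K : List Y → U,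
        W ωh k ≤ ∑ ys : Fin (M - k) → Y, Gcost Γ R F K [] ωh (List.ofFn ys) := by
  -- key generalized claim, by induction on the number of remaining steps
  have key : ∀ (m k : ℕ), k + m = M → ∀ ωh : Mat n, ωh.PosSemidef →
      ∀ (K : List Y → U) (rec : List Y),
        W ωh k ≤ ∑ ys : Fin m → Y, Gcost Γ R F K rec ωh (List.ofFn ys) := by
    intro m
    induction m with
    | zero =>
      intro k hk ωh hωh K rec
      have hk' : k = M := by omega
      rw [Fintype.sum_unique]
      subst hk'
      rw [hWM]
      simp [Gcost]
    | succ m ih =>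
      intro k hk ωh hωh K rec
      have hkM : k < M := by omega
      rw [hWk k hkM ωh hωh]
      have hbdd : BddBelow (Set.range fun u : U =>
          ∑ y : Y, W (lamR Γ R u y ωh) (k + 1) * pR Γ R u y ωh) :=
        (Set.finite_range _).bddBelow
      refine le_trans (ciInf_le hbdd (K rec)) ?_
      -- reindex the RHS sum
      have hreindex : ∑ ys : Fin (m + 1) → Y, Gcost Γ R F K rec ωh (List.ofFn ys)
          = ∑ y : Y, ∑ ys : Fin m → Y,
              Gcost Γ R F K (rec ++ [y]) (Γ (K rec) y (R (K rec) ωh)) (List.ofFn ys) := by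
        rw [← Equiv.sum_comp (Fin.consEquiv (fun _ : Fin (m+1) => Y))]
        rw [Fintype.sum_prod_type]
        refine Finset.sum_congr rfl fun y _ => Finset.sum_congr rfl fun ys _ => ?_
        have : List.ofFn (Fin.consEquiv (fun _ : Fin (m+1) => Y) (y, ys))
            = y :: List.ofFn ys := by
          simp [Fin.consEquiv, List.ofFn_succ]
        rw [this]
        rfl
      rw [hreindex]
      refine Finset.sum_le_sum fun y _ => ?_
      set u := K rec with hu
      set p := pR Γ R u y ωh with hp
      have hnum : (Γ u y (R u ωh)).PosSemidef := hPSD u y _ (hRPSD u ωh hωh)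
      have hnum0 : 0 ≤ trR (Γ u y (R u ωh)) := trR_nonneg_of_psd hnum
      have hden0 : 0 ≤ trR (R u ωh) := trR_nonneg_of_psd (hRPSD u ωh hωh)
      have hpnn : 0 ≤ p := div_nonneg hnum0 hden0
      by_cases hp0 : p = 0
      · -- zero-probability branch: the propagated state is zero
        have hnumz : Γ u y (R u ωh) = 0 := by
          rcases eq_or_lt_of_le hden0 with hden | hden
          · have : R u ωh = 0 := eq_zero_of_psd_trR_eq_zero (hRPSD u ωh hωh) hden.symm
            rw [this, map_zero]
          · have : trR (Γ u y (R u ωh)) = 0 := by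
              have := hp0
              rw [hp, pR, div_eq_zero_iff] at this
              rcases this with h | h
              · exact h
              · exact absurd h (ne_of_gt hden)
            exact eq_zero_of_psd_trR_eq_zero hnum this
        rw [hp0, mul_zero, hnumz]
        refine Finset.sum_nonneg fun ys _ => ?_
        rw [Gcost_zero Γ R hRhom F K]
      · -- positive-probability branch: use the induction hypothesis
        have hppos : 0 < p := lt_of_le_of_ne hpnn (Ne.symm hp0)
        have hlampsd : (lamR Γ R u y ωh).PosSemidef := by
          unfold lamR
          exact psd_real_smul_s5 hnum (inv_nonneg.mpr hpnn)
        have hIH := ih (k + 1) (by omega) (lamR Γ R u y ωh) hlampsd K (rec ++ [y])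
        have := mul_le_mul_of_nonneg_right hIH hpnn
        refine le_trans this ?_
        rw [Finset.sum_mul]
        refine le_of_eq (Finset.sum_congr rfl fun ys _ => ?_)
        rw [mul_comm, ← Gcost_smul Γ R hRhom F K]
        congr 1
        unfold lamR
        rw [← hp, smul_smul, mul_inv_cancel₀ hp0, one_smul]
  intro k hk ωh hωh K
  exact key (M - k) k (by omega) ωh hωh K []
end
end
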